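/- For every ε > 0 and every integer r ≥ 2 there exists β > 0 with the following property. Let E be a real inner product space and σ : [−1,1] → E a C^r curve that is bounded but not strongly ε-bounded. Then there exist −1 < t₁ < 0 < t₂ < 1 such that: (i) for every t ∈ [t₁, t₂] there exists a map φ_t from {v ∈ ℝ·σ′(t) : ‖v‖ ≤ β} to the orthogonal complement of ℝ·σ′(t) with φ_t(0) = 0 and ‖φ_t(v) − φ_t(w)‖ ≤ (1/3)‖v − w‖ for all v, w in its domain, such that the translated graph σ(t) + {v + φ_t(v) : v ∈ ℝ·σ′(t), ‖v‖ ≤ β} is contained in σ([−1,1]), and moreover every s ∈ [−1,1] with σ(s) in this graph satisfies ∠(σ′(s), σ′(t)) ≤ ‖σ(s) − σ(t)‖/β; (ii) the increasing affine bijections θ⁻ : [−1,1] → [−1, t₁] and θ⁺ : [−1,1] → [t₂, 1] make σ∘θ⁻ and σ∘θ⁺ strongly ε-bounded. -/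

import Mathlib

open Set Real
open scoped InnerProductSpace

universe u

/-- `D` is a family of successive derivatives (up to order `r`) of the curve `D 0` on
`[−1,1]`: `D (k+1)` is the derivative of `D k` within `[−1,1]`, for every `k < r`. -/
def DerivFamilyOn {E : Type*} [NormedAddCommGroup E] [NormedSpace ℝ E]
    (r : ℕ) (D : ℕ → ℝ → E) : Prop :=
  ∀ k < r, ∀ t ∈ Icc (-1:ℝ) 1, HasDerivWithinAt (D k) (D (k + 1) t) (Icc (-1:ℝ) 1) t

/-- The supremum `sup_{t ∈ [−1,1]} ‖D 1 (t)‖` of the norm of the first derivative. -/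
noncomputable def supD1 {E : Type*} [NormedAddCommGroup E] [NormedSpace ℝ E]
    (D : ℕ → ℝ → E) : ℝ :=
  ⨆ t : Icc (-1:ℝ) 1, ‖D 1 t.1‖

/-- The curve `D 0` is *bounded*: `sup_{2 ≤ s ≤ r} sup_{t ∈ [−1,1]} ‖D s (t)‖ ≤ (1/6)·sup ‖D 1‖`. -/
def BoundedFamily {E : Type*} [NormedAddCommGroup E] [NormedSpace ℝ E]
    (r : ℕ) (D : ℕ → ℝ → E) : Prop :=
  ∀ s, 2 ≤ s → s ≤ r → ∀ t ∈ Icc (-1:ℝ) 1, ‖D s t‖ ≤ (1 / 6) * supD1 D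

/-- The curve `D 0` is *strongly ε-bounded*: it is bounded and `sup ‖D 1‖ ≤ ε`. -/
def StronglyBoundedFamily {E : Type*} [NormedAddCommGroup E] [NormedSpace ℝ E]
    (r : ℕ) (ε : ℝ) (D : ℕ → ℝ → E) : Prop :=
  BoundedFamily r D ∧ ∀ t ∈ Icc (-1:ℝ) 1, ‖D 1 t‖ ≤ ε

/-- The family of successive derivatives of the reparametrized curve `t ↦ D 0 (c·t + d)`:
its `k`-th derivative is `c^k • D k (c·t + d)`. -/
noncomputable def affineReparam {E : Type*} [NormedAddCommGroup E] [NormedSpace ℝ E]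
    (c d : ℝ) (D : ℕ → ℝ → E) : ℕ → ℝ → E :=
  fun k t => c ^ k • D k (c * t + d)

lemma angle_aux {E : Type*} [NormedAddCommGroup E] [InnerProductSpace ℝ E]
    (x y : E) (hx : x ≠ 0) (hy : y ≠ 0) :
    InnerProductGeometry.angle x y ≤ π * ‖x - y‖ / ‖y‖ := by
  set θ := InnerProductGeometry.angle x y with hθ
  have hθ0 : 0 ≤ θ := InnerProductGeometry.angle_nonneg x y
  have hθπ : θ ≤ π := InnerProductGeometry.angle_le_pi x y
  have hnx : (0:ℝ) < ‖x‖ := norm_pos_iff.2 hx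
  have hny : (0:ℝ) < ‖y‖ := norm_pos_iff.2 hy
  set x' := ‖x‖⁻¹ • x with hx'
  set y' := ‖y‖⁻¹ • y with hy'
  have hnx' : ‖x'‖ = 1 := by rw [hx', norm_smul]; simp [hnx.ne']
  have hny' : ‖y'‖ = 1 := by rw [hy', norm_smul]; simp [hny.ne']
  have hcos : Real.cos θ = (inner ℝ x' y' : ℝ) := by
    rw [hθ, InnerProductGeometry.cos_angle, hx', hy', real_inner_smul_left,
      real_inner_smul_right]
    field_simp
  -- step A : θ ≤ π/2 * ‖x' - y'‖
  have hsq : ‖x' - y'‖ ^ 2 = 2 - 2 * Real.cos θ := by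
    rw [@norm_sub_sq_real, hnx', hny', hcos]; ring
  have hA : θ ≤ π / 2 * ‖x' - y'‖ := by
    have h2 : Real.cos θ ≤ 1 - 2 / π ^ 2 * θ ^ 2 :=
      Real.cos_le_one_sub_mul_cos_sq (by rw [abs_of_nonneg hθ0]; exact hθπ)
    have hπ : (0:ℝ) < π := Real.pi_pos
    have h3 : θ ^ 2 ≤ (π / 2 * ‖x' - y'‖) ^ 2 := by
      have : 2 / π ^ 2 * θ ^ 2 ≤ 1 - Real.cos θ := by linarith
      have h4 : θ ^ 2 ≤ π ^ 2 / 2 * (1 - Real.cos θ) := by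
        have h5 := mul_le_mul_of_nonneg_left this (by positivity : (0:ℝ) ≤ π ^ 2 / 2)
        have h6 : π ^ 2 / 2 * (2 / π ^ 2 * θ ^ 2) = θ ^ 2 := by
          field_simp
        linarith [h5, h6.symm.le]
      calc θ ^ 2 ≤ π ^ 2 / 2 * (1 - Real.cos θ) := h4
        _ = π ^ 2 / 4 * (2 - 2 * Real.cos θ) := by ring
        _ = (π / 2 * ‖x' - y'‖) ^ 2 := by rw [mul_pow, hsq]; ring
    have hc : (0:ℝ) ≤ π / 2 * ‖x' - y'‖ := by positivity
    nlinarith [h3, hθ0, hc]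
  -- step B : ‖x' - y'‖ ≤ 2 ‖x - y‖ / ‖y‖
  have hB : ‖x' - y'‖ ≤ 2 * ‖x - y‖ / ‖y‖ := by
    have hdecomp : x' - y' = ‖y‖⁻¹ • (x - y) + (‖x‖⁻¹ - ‖y‖⁻¹) • x := by
      rw [hx', hy', smul_sub, sub_smul]; abel
    have h1 : ‖‖y‖⁻¹ • (x - y)‖ = ‖x - y‖ / ‖y‖ := by
      rw [norm_smul]; simp [abs_of_nonneg (inv_nonneg.2 hny.le), div_eq_inv_mul]
    have h2 : ‖(‖x‖⁻¹ - ‖y‖⁻¹) • x‖ ≤ ‖x - y‖ / ‖y‖ := by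
      rw [norm_smul, Real.norm_eq_abs]
      have : |‖x‖⁻¹ - ‖y‖⁻¹| * ‖x‖ = |‖y‖ - ‖x‖| / ‖y‖ := by
        rw [inv_sub_inv hnx.ne' hny.ne', abs_div, abs_mul,
          abs_of_nonneg hnx.le, abs_of_nonneg hny.le]
        field_simp
      rw [this]
      have := abs_norm_sub_norm_le y x
      rw [div_le_div_iff₀ hny hny]
      have h5 : ‖y - x‖ = ‖x - y‖ := norm_sub_rev y x
      nlinarith [abs_nonneg (‖y‖ - ‖x‖), norm_nonneg (x - y)]
    calc ‖x' - y'‖ ≤ ‖‖y‖⁻¹ • (x - y)‖ + ‖(‖x‖⁻¹ - ‖y‖⁻¹) • x‖ := by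
          rw [hdecomp]; exact norm_add_le _ _
      _ ≤ ‖x - y‖ / ‖y‖ + ‖x - y‖ / ‖y‖ := by rw [h1]; linarith
      _ = 2 * ‖x - y‖ / ‖y‖ := by ring
  calc θ ≤ π / 2 * ‖x' - y'‖ := hA
    _ ≤ π / 2 * (2 * ‖x - y‖ / ‖y‖) := by
        apply mul_le_mul_of_nonneg_left hB (by positivity)
    _ = π * ‖x - y‖ / ‖y‖ := by ring

lemma angle_le_abs_aux {E : Type*} [NormedAddCommGroup E] [InnerProductSpace ℝ E]
    (x u : E) (hx0 : x ≠ 0) (hu0 : u ≠ 0) {M d : ℝ} (hM0 : 0 < M)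
    (hu : 2*M/3 ≤ ‖u‖) (hnum : ‖x - u‖ ≤ M/6 * d) (hd : 0 ≤ d) :
    InnerProductGeometry.angle x u ≤ d := by
  have hangle := angle_aux x u hx0 hu0
  have hnu : (0:ℝ) < ‖u‖ := by linarith
  have h1 : InnerProductGeometry.angle x u * ‖u‖ ≤ π * ‖x - u‖ := by
    rw [← le_div_iff₀ hnu]
    exact hangle
  have h2 : π * ‖x - u‖ ≤ 4 * (M/6 * d) := by
    nlinarith [Real.pi_le_four, norm_nonneg (x - u), Real.pi_pos]
  have hθ0 := InnerProductGeometry.angle_nonneg x u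
  nlinarith

lemma final_angle_aux {θ d ε M N : ℝ} (hθ : θ ≤ d) (hN : 7*M/12 * d ≤ N) (hεM : ε ≤ M)
    (hε : 0 < ε) (hθ0 : 0 ≤ θ) (hd : 0 ≤ d) : θ * (ε/4) ≤ N := by
  nlinarith

set_option maxHeartbeats 4000000 in
lemma graph_aux {E : Type*} [NormedAddCommGroup E] [InnerProductSpace ℝ E]
    {r : ℕ} (hr : 2 ≤ r) (D : ℕ → ℝ → E)
    (hD : DerivFamilyOn r D) {ε M : ℝ} (hε : 0 < ε) (hεM : ε ≤ M)
    (hlow : ∀ s ∈ Icc (-1:ℝ) 1, 2 * M / 3 ≤ ‖D 1 s‖)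
    (hD2 : ∀ s ∈ Icc (-1:ℝ) 1, ‖D 2 s‖ ≤ M / 6)
    {m : ℝ} (hm0 : 0 < m) (hm2 : m ≤ 1/2) (hmM : ε / 2 ≤ m * M)
    (t : ℝ) (ht : t ∈ Icc (-1 + m) (1 - m)) :
    ∃ φ : E → E,
      φ 0 = 0 ∧
      (∀ v, v ∈ (ℝ ∙ D 1 t) → ‖v‖ ≤ ε/4 → φ v ∈ (ℝ ∙ D 1 t)ᗮ) ∧
      (∀ v, v ∈ (ℝ ∙ D 1 t) → ‖v‖ ≤ ε/4 → ∀ w, w ∈ (ℝ ∙ D 1 t) → ‖w‖ ≤ ε/4 →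
        ‖φ v - φ w‖ ≤ 1 / 3 * ‖v - w‖) ∧
      (∀ v, v ∈ (ℝ ∙ D 1 t) → ‖v‖ ≤ ε/4 →
        D 0 t + v + φ v ∈ D 0 '' Icc (-1:ℝ) 1) ∧
      (∀ s ∈ Icc (-1:ℝ) 1,
        (∃ v, v ∈ (ℝ ∙ D 1 t) ∧ ‖v‖ ≤ ε/4 ∧ D 0 s = D 0 t + v + φ v) →
        InnerProductGeometry.angle (D 1 s) (D 1 t) ≤ ‖D 0 s - D 0 t‖ / (ε/4)) := by
  classical
  have hM0 : 0 < M := lt_of_lt_of_le hε hεM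
  have ht' : t ∈ Icc (-1:ℝ) 1 := ⟨by linarith [ht.1], by linarith [ht.2]⟩
  set u := D 1 t with hu_def
  have hu : 2 * M / 3 ≤ ‖u‖ := hlow t ht'
  have hu0 : u ≠ 0 := by
    intro h
    rw [h, norm_zero] at hu
    linarith
  have hnu : (0:ℝ) < ‖u‖ := by linarith
  set q : E := ‖u‖⁻¹ • u with hq_def
  have hq1 : ‖q‖ = 1 := by rw [hq_def, norm_smul]; simp [hnu.ne']
  have hqu : ⟪u, q⟫_ℝ = ‖u‖ := by
    rw [hq_def, real_inner_smul_right, real_inner_self_eq_norm_mul_norm]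
    field_simp
  have hzu : ∀ z : E, ⟪z, u⟫_ℝ = ‖u‖ * ⟪z, q⟫_ℝ := by
    intro z
    rw [hq_def, real_inner_smul_right, ← mul_assoc, mul_inv_cancel₀ hnu.ne', one_mul]
  -- Lipschitz bound for D 1
  have hE0 : ∀ s ∈ Icc (-1:ℝ) 1, ∀ s' ∈ Icc (-1:ℝ) 1, ‖D 1 s - D 1 s'‖ ≤ M/6 * |s - s'| := by
    intro s hs s' hs'
    have := Convex.norm_image_sub_le_of_norm_hasDerivWithin_le
      (f := D 1) (f' := D 2) (fun x hx => hD 1 (by omega) x hx) hD2 (convex_Icc _ _) hs' hs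
    rwa [Real.norm_eq_abs] at this
  -- error estimate for σ against the line, on a subinterval with |x - t| ≤ ρ and constant C
  have key : ∀ a b : ℝ, a ≤ t → t ≤ b → Icc a b ⊆ Icc (-1:ℝ) 1 →
      ∀ ρ : ℝ, (∀ x ∈ Icc a b, |x - t| ≤ ρ) →
      ∀ s ∈ Icc a b, ∀ s' ∈ Icc a b, ‖D 0 s - D 0 s' - (s - s') • u‖ ≤ (M/6 * ρ) * |s - s'| := by
    intro a b hat htb hsub ρ hρ s hs s' hs'
    have hf : ∀ x ∈ Icc a b, HasDerivWithinAt (fun x => D 0 x - x • u) (D 1 x - u) (Icc a b) x := by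
      intro x hx
      have h1 : HasDerivWithinAt (fun x : ℝ => x • u) u (Icc a b) x := by
        simpa using ((hasDerivAt_id x).smul_const u).hasDerivWithinAt
      exact ((hD 0 (by omega) x (hsub hx)).mono hsub).sub h1
    have hbound : ∀ x ∈ Icc a b, ‖D 1 x - u‖ ≤ M/6 * ρ := by
      intro x hx
      calc ‖D 1 x - u‖ ≤ M/6 * |x - t| := hE0 x (hsub hx) t ht'
        _ ≤ M/6 * ρ := by
            apply mul_le_mul_of_nonneg_left (hρ x hx)
            positivity
    have := Convex.norm_image_sub_le_of_norm_hasDerivWithin_le hf hbound (convex_Icc _ _) hs' hs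
    rw [Real.norm_eq_abs] at this
    calc ‖D 0 s - D 0 s' - (s - s') • u‖
        = ‖(D 0 s - s • u) - (D 0 s' - s' • u) - ((s - s') • u - (s - s') • u)‖ := by
          congr 1
          rw [sub_smul]
          abel
      _ ≤ (M/6 * ρ) * |s - s'| := by
          rw [sub_self, sub_zero]
          exact this
  -- the projected coordinate
  set ψ : ℝ → ℝ := fun s => ⟪D 0 s - D 0 t, q⟫_ℝ with hψ_def
  have hψt : ψ t = 0 := by simp [hψ_def]
  have hψdiff : ∀ s s' : ℝ, ψ s - ψ s' = ⟪D 0 s - D 0 s', q⟫_ℝ := by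
    intro s s'
    rw [hψ_def]
    simp only
    rw [← inner_sub_left]
    congr 1
    abel
  have habsq : ∀ z : E, |⟪z, q⟫_ℝ| ≤ ‖z‖ := by
    intro z
    calc |⟪z, q⟫_ℝ| ≤ ‖z‖ * ‖q‖ := abs_real_inner_le_norm z q
      _ = ‖z‖ := by rw [hq1, mul_one]
  -- increments of ψ from below
  have inc : ∀ a b ρ C : ℝ, a ≤ t → t ≤ b → Icc a b ⊆ Icc (-1:ℝ) 1 →
      (∀ x ∈ Icc a b, |x - t| ≤ ρ) → C ≤ ‖u‖ - M/6 * ρ →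
      ∀ s ∈ Icc a b, ∀ s' ∈ Icc a b, s' ≤ s → C * (s - s') ≤ ψ s - ψ s' := by
    intro a b ρ C hat htb hsub hρ hC s hs s' hs' hss
    have herr := key a b hat htb hsub ρ hρ s hs s' hs'
    have hsplit : ψ s - ψ s' =
        ⟪D 0 s - D 0 s' - (s - s') • u, q⟫_ℝ + (s - s') * ‖u‖ := by
      have h5 : ψ s - ψ s' = ⟪(D 0 s - D 0 s' - (s - s') • u) + (s - s') • u, q⟫_ℝ := by
        rw [hψdiff]
        congr 1
        abel
      rw [h5, inner_add_left, real_inner_smul_left, hqu]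
    have h2 : -((M/6 * ρ) * (s - s')) ≤ ⟪D 0 s - D 0 s' - (s - s') • u, q⟫_ℝ := by
      have h3 := habsq (D 0 s - D 0 s' - (s - s') • u)
      have h4 := neg_abs_le (⟪D 0 s - D 0 s' - (s - s') • u, q⟫_ℝ)
      rw [abs_of_nonneg (by linarith : (0:ℝ) ≤ s - s')] at herr
      linarith
    nlinarith [hss, hC]
  -- global injectivity
  have hgl : ∀ s ∈ Icc (-1:ℝ) 1, ∀ s' ∈ Icc (-1:ℝ) 1, s' ≤ s →
      M/3 * (s - s') ≤ ψ s - ψ s' := by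
    intro s hs s' hs' hss
    refine inc (-1) 1 2 (M/3) (by linarith [ht'.1]) (by linarith [ht'.2]) subset_rfl
      ?_ (by linarith) s hs s' hs' hss
    intro x hx
    rw [abs_le]
    constructor <;> [linarith [hx.1, ht'.2]; linarith [hx.2, ht'.1]]
  have hinj : ∀ s ∈ Icc (-1:ℝ) 1, ∀ s' ∈ Icc (-1:ℝ) 1, D 0 s = D 0 s' → s = s' := by
    intro s hs s' hs' h
    have hψeq : ψ s - ψ s' = 0 := by rw [hψdiff, h]; simp
    rcases le_total s' s with hss | hss
    · have := hgl s hs s' hs' hss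
      nlinarith
    · have := hgl s' hs' s hs hss
      have hψeq' : ψ s' - ψ s = 0 := by linarith
      nlinarith
  -- the subinterval
  set ℓ : ℝ := max (t - 1/2) (-1) with hℓ_def
  set rr : ℝ := min (t + 1/2) 1 with hrr_def
  have hℓt : ℓ ≤ t := max_le (by linarith) (by linarith [ht'.1])
  have htrr : t ≤ rr := le_min (by linarith) (by linarith [ht'.2])
  have htJ : t ∈ Icc ℓ rr := ⟨hℓt, htrr⟩
  have hsubJ : Icc ℓ rr ⊆ Icc (-1:ℝ) 1 := by
    intro x hx
    exact ⟨le_trans (le_max_right _ _) hx.1, le_trans hx.2 (min_le_right _ _)⟩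
  have hρJ : ∀ x ∈ Icc ℓ rr, |x - t| ≤ 1/2 := by
    intro x hx
    rw [abs_le]
    constructor
    · linarith [le_trans (le_max_left _ _) hx.1]
    · linarith [le_trans hx.2 (min_le_left _ _)]
  have hCJ : (7*M/12 : ℝ) ≤ ‖u‖ - M/6 * (1/2) := by linarith
  have incJ := inc ℓ rr (1/2) (7*M/12) hℓt htrr hsubJ hρJ hCJ
  have keyJ := key ℓ rr hℓt htrr hsubJ (1/2) hρJ
  have hψinjJ : ∀ s ∈ Icc ℓ rr, ∀ s' ∈ Icc ℓ rr, ψ s = ψ s' → s = s' := by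
    intro s hs s' hs' h
    rcases le_total s' s with hss | hss
    · have := incJ s hs s' hs' hss; nlinarith
    · have := incJ s' hs' s hs hss; nlinarith
  -- coverage
  have hσc : ContinuousOn (D 0) (Icc (-1:ℝ) 1) :=
    fun x hx => (hD 0 (by omega) x hx).continuousWithinAt
  have hψc : ContinuousOn ψ (Icc ℓ rr) :=
    ((hσc.mono hsubJ).sub continuousOn_const).inner continuousOn_const
  have hmrr : m ≤ rr - t := by
    have h1 : m ≤ 1 - t := by linarith [ht.2]
    have : min (t + 1/2) 1 - t = min (1/2) (1 - t) := by
      rcases min_cases (t + 1/2) 1 with ⟨h, h'⟩ | ⟨h, h'⟩ <;>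
        rcases min_cases (1/2 : ℝ) (1 - t) with ⟨g, g'⟩ | ⟨g, g'⟩ <;> linarith
    rw [hrr_def, this]
    exact le_min hm2 h1
  have hmℓ : m ≤ t - ℓ := by
    have h1 : m ≤ t + 1 := by linarith [ht.1]
    have : t - max (t - 1/2) (-1) = min (1/2) (t + 1) := by
      rcases max_cases (t - 1/2) (-1 : ℝ) with ⟨h, h'⟩ | ⟨h, h'⟩ <;>
        rcases min_cases (1/2 : ℝ) (t + 1) with ⟨g, g'⟩ | ⟨g, g'⟩ <;> linarith
    rw [hℓ_def, this]
    exact le_min hm2 h1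
  have hcovR : ε/4 ≤ ψ rr := by
    have := incJ rr ⟨hℓt.trans htrr, le_refl rr⟩ t htJ htrr
    rw [hψt, sub_zero] at this
    nlinarith [hmM, hm0]
  have hcovL : ψ ℓ ≤ -(ε/4) := by
    have := incJ t htJ ℓ ⟨le_refl ℓ, hℓt.trans htrr⟩ hℓt
    rw [hψt, zero_sub] at this
    nlinarith [hmM, hm0]
  have hIVT : ∀ a : ℝ, |a| ≤ ε/4 → ∃ s ∈ Icc ℓ rr, ψ s = a := by
    intro a ha
    rw [abs_le] at ha
    have hmem : a ∈ Icc (ψ ℓ) (ψ rr) := ⟨by linarith [ha.1], by linarith [ha.2]⟩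
    have := intermediate_value_Icc (hℓt.trans htrr) hψc hmem
    obtain ⟨s, hs, hψs⟩ := this
    exact ⟨s, hs, hψs⟩
  -- the inverse map and the graph function
  set sOf : ℝ → ℝ := fun a => if h : ∃ s ∈ Icc ℓ rr, ψ s = a then h.choose else t
    with hsOf_def
  have hsOf : ∀ a : ℝ, |a| ≤ ε/4 → sOf a ∈ Icc ℓ rr ∧ ψ (sOf a) = a := by
    intro a ha
    have h := hIVT a ha
    rw [hsOf_def]
    simp only [dif_pos h]
    exact ⟨h.choose_spec.1, h.choose_spec.2⟩
  set φ : E → E := fun v => D 0 (sOf ⟪v, q⟫_ℝ) - D 0 t - v with hφ_def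
  have hrep : ∀ v, v ∈ (ℝ ∙ u) → v = ⟪v, q⟫_ℝ • q := by
    intro v hv
    obtain ⟨c, rfl⟩ := Submodule.mem_span_singleton.1 hv
    rw [real_inner_smul_left, hqu, hq_def, smul_smul]
    congr 1
    field_simp
  have habs : ∀ v : E, ‖v‖ ≤ ε/4 → |⟪v, q⟫_ℝ| ≤ ε/4 :=
    fun v hv => le_trans (habsq v) hv
  have hgraph : ∀ v, v ∈ (ℝ ∙ u) → ‖v‖ ≤ ε/4 → D 0 t + v + φ v = D 0 (sOf ⟪v, q⟫_ℝ) := by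
    intro v _ _
    rw [hφ_def]
    simp only
    abel
  refine ⟨φ, ?_, ?_, ?_, ?_, ?_⟩
  · -- φ 0 = 0
    have h0 : |(0:ℝ)| ≤ ε/4 := by rw [abs_zero]; positivity
    have h1 := hsOf 0 h0
    have h2 : sOf 0 = t := hψinjJ _ h1.1 t htJ (by rw [h1.2, hψt])
    rw [hφ_def]
    simp only [inner_zero_left, h2, sub_self, sub_zero]
  · -- orthogonality
    intro v hv hv4
    have ha := habs v hv4
    obtain ⟨hsa, hψa⟩ := hsOf _ ha
    rw [Submodule.mem_orthogonal_singleton_iff_inner_right, hφ_def]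
    simp only
    rw [inner_sub_right, inner_sub_right]
    have h1 : ⟪u, D 0 (sOf ⟪v, q⟫_ℝ) - D 0 t⟫_ℝ = ‖u‖ * ⟪v, q⟫_ℝ := by
      have h2 : ψ (sOf ⟪v, q⟫_ℝ) = ⟪D 0 (sOf ⟪v, q⟫_ℝ) - D 0 t, q⟫_ℝ := rfl
      rw [hψa] at h2
      rw [real_inner_comm, hzu, ← h2]
    have h3 : ⟪u, v⟫_ℝ = ‖u‖ * ⟪v, q⟫_ℝ := by
      conv_lhs => rw [hrep v hv]
      rw [real_inner_smul_right, hqu]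
      ring
    rw [inner_sub_right] at h1
    rw [h3]
    linarith [h1]
  · -- Lipschitz
    intro v hv hv4 w hw hw4
    have hav := habs v hv4
    have haw := habs w hw4
    obtain ⟨hsa, hψa⟩ := hsOf _ hav
    obtain ⟨hsb, hψb⟩ := hsOf _ haw
    set sa := sOf ⟪v, q⟫_ℝ
    set sb := sOf ⟪w, q⟫_ℝ
    have hvw : v - w = (⟪v, q⟫_ℝ - ⟪w, q⟫_ℝ) • q := by
      rw [sub_smul, ← hrep v hv, ← hrep w hw]
    have hnvw : ‖v - w‖ = |⟪v, q⟫_ℝ - ⟪w, q⟫_ℝ| := by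
      rw [hvw, norm_smul, hq1, Real.norm_eq_abs, mul_one]
    -- ‖φ v - φ w‖ = ‖z' - ⟪z', q⟫ q‖ with z' the straightened difference
    set z' : E := D 0 sa - D 0 sb - (sa - sb) • u with hz'_def
    have hz'bound : ‖z'‖ ≤ (M/6 * (1/2)) * |sa - sb| := keyJ sa hsa sb hsb
    have hφdiff : φ v - φ w = z' - ⟪z', q⟫_ℝ • q := by
      have hab : ⟪v, q⟫_ℝ - ⟪w, q⟫_ℝ = ⟪D 0 sa - D 0 sb, q⟫_ℝ := by
        rw [← hψa, ← hψb, hψdiff]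
      have hz'q : ⟪z', q⟫_ℝ = ⟪D 0 sa - D 0 sb, q⟫_ℝ - (sa - sb) * ‖u‖ := by
        rw [hz'_def, inner_sub_left, real_inner_smul_left, hqu]
      have huq : ((sa - sb) * ‖u‖) • q = (sa - sb) • u := by
        rw [hq_def, smul_smul]
        congr 1
        field_simp
      have e1 : φ v - φ w = D 0 sa - D 0 sb - (v - w) := by
        rw [hφ_def]
        simp only
        abel
      have e2 : (⟪z', q⟫_ℝ) • q = (v - w) - (sa - sb) • u := by
        rw [hz'q, sub_smul, huq, ← hab, ← hvw]
      rw [e1, e2, hz'_def]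
      abel
    have hP : ‖z' - ⟪z', q⟫_ℝ • q‖ ≤ ‖z'‖ := by
      have h1 : ‖z' - ⟪z', q⟫_ℝ • q‖ ^ 2 = ‖z'‖ ^ 2 - ⟪z', q⟫_ℝ ^ 2 := by
        rw [norm_sub_sq_real, real_inner_smul_right, norm_smul, Real.norm_eq_abs, hq1]
        rw [mul_one, sq_abs]
        ring
      nlinarith [norm_nonneg (z' - ⟪z', q⟫_ℝ • q), norm_nonneg z', sq_nonneg (⟪z', q⟫_ℝ)]
    have hlowvw : (7*M/12) * |sa - sb| ≤ |⟪v, q⟫_ℝ - ⟪w, q⟫_ℝ| := by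
      have hab : ⟪v, q⟫_ℝ - ⟪w, q⟫_ℝ = ψ sa - ψ sb := by rw [hψa, hψb]
      rcases le_total sb sa with hss | hss
      · have := incJ sa hsa sb hsb hss
        rw [hab, abs_of_nonneg (by linarith : (0:ℝ) ≤ sa - sb)]
        rw [abs_of_nonneg (by nlinarith : (0:ℝ) ≤ ψ sa - ψ sb)]
        linarith
      · have := incJ sb hsb sa hsa hss
        rw [hab, abs_of_nonpos (by linarith : sa - sb ≤ 0)]
        rw [abs_of_nonpos (by nlinarith : ψ sa - ψ sb ≤ 0)]
        linarith
    rw [hφdiff, hnvw]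
    calc ‖z' - ⟪z', q⟫_ℝ • q‖ ≤ ‖z'‖ := hP
      _ ≤ (M/6 * (1/2)) * |sa - sb| := hz'bound
      _ ≤ 1/3 * |⟪v, q⟫_ℝ - ⟪w, q⟫_ℝ| := by nlinarith [abs_nonneg (sa - sb)]
  · -- graph contained in the image
    intro v hv hv4
    have ha := habs v hv4
    obtain ⟨hsa, _⟩ := hsOf _ ha
    exact ⟨sOf ⟪v, q⟫_ℝ, hsubJ hsa, (hgraph v hv hv4).symm⟩
  · -- the angle estimate
    intro s hs ⟨v, hv, hv4, heq⟩
    have ha := habs v hv4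
    obtain ⟨hsa, hψa⟩ := hsOf _ ha
    have heq2 : D 0 s = D 0 (sOf ⟪v, q⟫_ℝ) := by rw [heq, hgraph v hv hv4]
    have hssa : s = sOf ⟪v, q⟫_ℝ := hinj s hs _ (hsubJ hsa) heq2
    have hsJ : s ∈ Icc ℓ rr := hssa ▸ hsa
    by_cases hst : s = t
    · subst hst
      rw [sub_self, norm_zero, zero_div, InnerProductGeometry.angle_self hu0]
    · have hDs : 2 * M / 3 ≤ ‖D 1 s‖ := hlow s hs
      have hDs0 : D 1 s ≠ 0 := by
        intro h
        rw [h, norm_zero] at hDs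
        linarith
      have hnum : ‖D 1 s - u‖ ≤ M/6 * |s - t| := hE0 s hs t ht'
      have habs_st : (0:ℝ) ≤ |s - t| := abs_nonneg _
      have hθst : InnerProductGeometry.angle (D 1 s) u ≤ |s - t| :=
        angle_le_abs_aux (D 1 s) u hDs0 hu0 hM0 hu hnum habs_st
      -- ‖D 0 s - D 0 t‖ ≥ 7M/12 |s - t|
      have hψs : (7*M/12) * |s - t| ≤ |ψ s| := by
        rcases le_total t s with hss | hss
        · have := incJ s hsJ t htJ hss
          rw [hψt, sub_zero] at this
          rw [abs_of_nonneg (by linarith : (0:ℝ) ≤ s - t)]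
          rw [abs_of_nonneg (by nlinarith : (0:ℝ) ≤ ψ s)]
          linarith
        · have := incJ t htJ s hsJ hss
          rw [hψt] at this
          rw [abs_of_nonpos (by linarith : s - t ≤ 0)]
          rw [abs_of_nonpos (by nlinarith : ψ s ≤ 0)]
          linarith
      have hnz : (7*M/12) * |s - t| ≤ ‖D 0 s - D 0 t‖ :=
        le_trans hψs (habsq (D 0 s - D 0 t))
      rw [le_div_iff₀ (by positivity : (0:ℝ) < ε/4)]
      exact final_angle_aux hθst hnz hεM hε
        (InnerProductGeometry.angle_nonneg _ _) habs_st


lemma derivFamilyOn_reparam {E : Type*} [NormedAddCommGroup E] [NormedSpace ℝ E]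
    {r : ℕ} {D : ℕ → ℝ → E} (c d : ℝ) (hD : DerivFamilyOn r D)
    (hmaps : ∀ t ∈ Icc (-1:ℝ) 1, c * t + d ∈ Icc (-1:ℝ) 1) :
    DerivFamilyOn r (affineReparam c d D) := by
  intro k hk t ht
  have h1 : HasDerivWithinAt (fun t : ℝ => c * t + d) c (Icc (-1:ℝ) 1) t := by
    simpa using (((hasDerivAt_id t).const_mul c).add_const d).hasDerivWithinAt
  have h2 : HasDerivWithinAt (fun x : ℝ => D k (c * x + d)) (c • D (k + 1) (c * t + d))
      (Icc (-1:ℝ) 1) t := by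
    have := (hD k hk _ (hmaps t ht)).scomp t h1 (fun x hx => hmaps x hx)
    exact this
  have h3 := h2.const_smul (c ^ k)
  show HasDerivWithinAt (fun x : ℝ => c ^ k • D k (c * x + d))
    (c ^ (k+1) • D (k + 1) (c * t + d)) (Icc (-1:ℝ) 1) t
  convert h3 using 1
  · rfl
  · rw [smul_smul, pow_succ]

lemma strongly_aux {E : Type*} [NormedAddCommGroup E] [NormedSpace ℝ E]
    {r : ℕ} (hr : 2 ≤ r) {D : ℕ → ℝ → E} {ε M : ℝ} (hM : M = supD1 D) (hM0 : 0 < M)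
    (hB : BoundedFamily r D)
    (hub : ∀ t ∈ Icc (-1:ℝ) 1, ‖D 1 t‖ ≤ M)
    (hlow : ∀ t ∈ Icc (-1:ℝ) 1, 2 * M / 3 ≤ ‖D 1 t‖)
    {c d : ℝ} (hc0 : 0 < c) (hc : c ≤ 1/4) (hcM : c * M ≤ ε)
    (hmaps : ∀ t ∈ Icc (-1:ℝ) 1, c * t + d ∈ Icc (-1:ℝ) 1) :
    StronglyBoundedFamily r ε (affineReparam c d D) := by
  have hval : ∀ k t, affineReparam c d D k t = c ^ k • D k (c * t + d) := fun _ _ => rfl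
  have hnorm1 : ∀ t ∈ Icc (-1:ℝ) 1, ‖affineReparam c d D 1 t‖ = c * ‖D 1 (c * t + d)‖ := by
    intro t ht
    rw [hval, norm_smul, pow_one, Real.norm_eq_abs, abs_of_pos hc0]
  have hbdd : BddAbove (range fun t : Icc (-1:ℝ) 1 => ‖affineReparam c d D 1 t.1‖) := by
    refine ⟨c * M, ?_⟩
    rintro x ⟨⟨t, ht⟩, rfl⟩
    show ‖affineReparam c d D 1 t‖ ≤ c * M
    rw [hnorm1 t ht]
    exact mul_le_mul_of_nonneg_left (hub _ (hmaps t ht)) hc0.le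
  haveI : Nonempty (Icc (-1:ℝ) 1) := ⟨⟨0, by norm_num⟩⟩
  have hsup_le : supD1 (affineReparam c d D) ≤ c * M := by
    refine ciSup_le fun ⟨t, ht⟩ => ?_
    show ‖affineReparam c d D 1 t‖ ≤ c * M
    rw [hnorm1 t ht]
    exact mul_le_mul_of_nonneg_left (hub _ (hmaps t ht)) hc0.le
  have hsup_ge : 2 * (c * M) / 3 ≤ supD1 (affineReparam c d D) := by
    have h1 : ‖affineReparam c d D 1 (-1 : ℝ)‖ ≤ supD1 (affineReparam c d D) :=
      le_ciSup hbdd (⟨(-1 : ℝ), by norm_num⟩ : Icc (-1:ℝ) 1)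
    have h2 : 2 * M / 3 ≤ ‖D 1 (c * (-1) + d)‖ := hlow _ (hmaps (-1) (by norm_num))
    rw [hnorm1 (-1) (by norm_num)] at h1
    nlinarith
  constructor
  · intro s hs2 hsr t ht
    rw [hval, norm_smul, Real.norm_eq_abs, abs_pow, abs_of_pos hc0]
    have h1 : ‖D s (c * t + d)‖ ≤ (1/6) * M := by
      rw [hM]; exact hB s hs2 hsr _ (hmaps t ht)
    have h2 : c ^ s ≤ c ^ 2 := pow_le_pow_of_le_one hc0.le (by linarith) hs2
    have h3 : c ^ 2 ≤ (1/4) * c := by nlinarith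
    have h4 : c ^ s * ‖D s (c * t + d)‖ ≤ (1/4) * c * ((1/6) * M) := by
      apply mul_le_mul (h2.trans h3) h1 (norm_nonneg _)
      positivity
    refine h4.trans ?_
    nlinarith
  · intro t ht
    rw [hnorm1 t ht]
    calc c * ‖D 1 (c * t + d)‖ ≤ c * M :=
          mul_le_mul_of_nonneg_left (hub _ (hmaps t ht)) hc0.le
      _ ≤ ε := hcM


set_option maxHeartbeats 1000000 in
/-- (The paper's Lemma 2-Res in a linear ambient space.) For every `ε > 0`
and `r ≥ 2` there is `β > 0` such that for every bounded, not strongly ε-bounded C^r curve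
`σ : [−1,1] → E` into a real inner product space there are `−1 < t₁ < 0 < t₂ < 1` with:
(i) each `t ∈ [t₁,t₂]` carries a `1/3`-Lipschitz graph of size `β` over `ℝ·σ′(t)` (with values
in its orthogonal complement) contained in `σ([−1,1])`, along which the tangent direction
satisfies the angle estimate `∠(σ′(s), σ′(t)) ≤ ‖σ(s) − σ(t)‖/β`; and
(ii) the affine reparametrizations of `σ` onto `[−1,t₁]` and `[t₂,1]` are strongly ε-bounded. -/
theorem stmt_7 (ε : ℝ) (hε : 0 < ε) (r : ℕ) (hr : 2 ≤ r) :
    ∃ β : ℝ, 0 < β ∧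
      ∀ (E : Type u) [NormedAddCommGroup E] [InnerProductSpace ℝ E],
        ∀ (σ : ℝ → E) (D : ℕ → ℝ → E), D 0 = σ → DerivFamilyOn r D → BoundedFamily r D →
          ε < supD1 D →
          ∃ t₁ t₂ : ℝ, -1 < t₁ ∧ t₁ < 0 ∧ 0 < t₂ ∧ t₂ < 1 ∧
            (∀ t ∈ Icc t₁ t₂, ∃ φ : E → E,
              φ 0 = 0 ∧
              (∀ v, v ∈ (ℝ ∙ D 1 t) → ‖v‖ ≤ β → φ v ∈ (ℝ ∙ D 1 t)ᗮ) ∧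
              (∀ v, v ∈ (ℝ ∙ D 1 t) → ‖v‖ ≤ β → ∀ w, w ∈ (ℝ ∙ D 1 t) → ‖w‖ ≤ β →
                ‖φ v - φ w‖ ≤ 1 / 3 * ‖v - w‖) ∧
              (∀ v, v ∈ (ℝ ∙ D 1 t) → ‖v‖ ≤ β →
                σ t + v + φ v ∈ σ '' Icc (-1:ℝ) 1) ∧
              (∀ s ∈ Icc (-1:ℝ) 1,
                (∃ v, v ∈ (ℝ ∙ D 1 t) ∧ ‖v‖ ≤ β ∧ σ s = σ t + v + φ v) →
                InnerProductGeometry.angle (D 1 s) (D 1 t) ≤ ‖σ s - σ t‖ / β)) ∧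
            (DerivFamilyOn r (affineReparam ((t₁ + 1) / 2) ((t₁ - 1) / 2) D) ∧
              StronglyBoundedFamily r ε (affineReparam ((t₁ + 1) / 2) ((t₁ - 1) / 2) D)) ∧
            (DerivFamilyOn r (affineReparam ((1 - t₂) / 2) ((1 + t₂) / 2) D) ∧
              StronglyBoundedFamily r ε (affineReparam ((1 - t₂) / 2) ((1 + t₂) / 2) D)) := by
  refine ⟨ε/4, by positivity, ?_⟩
  intro E _ _ σ D hσ hD hB hsup
  subst hσ
  haveI : Nonempty (Icc (-1:ℝ) 1) := ⟨⟨0, by norm_num⟩⟩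
  set M := supD1 D with hM_def
  have hM0 : 0 < M := hε.trans hsup
  have hεM : ε ≤ M := hsup.le
  have hcont1 : ContinuousOn (D 1) (Icc (-1:ℝ) 1) :=
    fun x hx => (hD 1 (by omega) x hx).continuousWithinAt
  obtain ⟨t₀, ht₀, hmax'⟩ := isCompact_Icc.exists_isMaxOn (by
      exact ⟨0, by norm_num⟩ : (Icc (-1:ℝ) 1).Nonempty) hcont1.norm
  have hmax : ∀ s ∈ Icc (-1:ℝ) 1, ‖D 1 s‖ ≤ ‖D 1 t₀‖ := fun s hs => hmax' hs
  have hbdd : BddAbove (range fun t : Icc (-1:ℝ) 1 => ‖D 1 t.1‖) := by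
    refine ⟨‖D 1 t₀‖, ?_⟩
    rintro x ⟨⟨s, hs⟩, rfl⟩
    exact hmax s hs
  have hub : ∀ s ∈ Icc (-1:ℝ) 1, ‖D 1 s‖ ≤ M :=
    fun s hs => le_ciSup hbdd (⟨s, hs⟩ : Icc (-1:ℝ) 1)
  have hMle : M ≤ ‖D 1 t₀‖ := ciSup_le fun ⟨s, hs⟩ => hmax s hs
  have hD2 : ∀ s ∈ Icc (-1:ℝ) 1, ‖D 2 s‖ ≤ M / 6 := by
    intro s hs
    have := hB 2 le_rfl hr s hs
    rw [← hM_def] at this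
    linarith
  have hE0 : ∀ s ∈ Icc (-1:ℝ) 1, ∀ s' ∈ Icc (-1:ℝ) 1, ‖D 1 s - D 1 s'‖ ≤ M/6 * |s - s'| := by
    intro s hs s' hs'
    have := Convex.norm_image_sub_le_of_norm_hasDerivWithin_le
      (f := D 1) (f' := D 2) (fun x hx => hD 1 (by omega) x hx) hD2 (convex_Icc _ _) hs' hs
    rwa [Real.norm_eq_abs] at this
  have hlow : ∀ s ∈ Icc (-1:ℝ) 1, 2 * M / 3 ≤ ‖D 1 s‖ := by
    intro s hs
    have h1 : ‖D 1 t₀‖ - ‖D 1 s‖ ≤ ‖D 1 t₀ - D 1 s‖ := norm_sub_norm_le _ _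
    have h2 : ‖D 1 t₀ - D 1 s‖ ≤ M/6 * |t₀ - s| := hE0 t₀ ht₀ s hs
    have h3 : |t₀ - s| ≤ 2 := by
      rw [abs_le]
      constructor <;> [linarith [ht₀.1, hs.2]; linarith [ht₀.2, hs.1]]
    nlinarith
  set m : ℝ := min (ε/M) (1/2) with hm_def
  have hm0 : 0 < m := lt_min (div_pos hε hM0) (by norm_num)
  have hm2 : m ≤ 1/2 := min_le_right _ _
  have hmM : ε / 2 ≤ m * M := by
    rcases le_total (ε/M) (1/2) with h | h
    · rw [hm_def, min_eq_left h, div_mul_cancel₀ _ hM0.ne']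
      linarith
    · rw [hm_def, min_eq_right h]
      linarith
  have hmMε : m * M ≤ ε := by
    have h1 : m ≤ ε/M := min_le_left _ _
    calc m * M ≤ (ε/M) * M := mul_le_mul_of_nonneg_right h1 hM0.le
      _ = ε := div_mul_cancel₀ _ hM0.ne'
  refine ⟨-1 + m, 1 - m, by linarith, by linarith, by linarith, by linarith, ?_, ?_, ?_⟩
  · intro t ht
    exact graph_aux hr D hD hε hεM hlow hD2 hm0 hm2 hmM t ht
  · -- left reparametrization
    have hmaps : ∀ t ∈ Icc (-1:ℝ) 1, ((-1 + m + 1)/2) * t + ((-1 + m - 1)/2) ∈ Icc (-1:ℝ) 1 := by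
      intro t ht
      have h1 : (0:ℝ) ≤ m * (t + 1) := mul_nonneg hm0.le (by linarith [ht.1])
      have h2 : (0:ℝ) ≤ m * (1 - t) := mul_nonneg hm0.le (by linarith [ht.2])
      constructor <;> nlinarith [ht.1, ht.2, hm0, hm2]
    refine ⟨derivFamilyOn_reparam _ _ hD hmaps, ?_⟩
    exact strongly_aux hr rfl hM0 hB hub hlow (by linarith) (by linarith)
      (by nlinarith) hmaps
  · -- right reparametrization
    have hmaps : ∀ t ∈ Icc (-1:ℝ) 1, ((1 - (1 - m))/2) * t + ((1 + (1 - m))/2) ∈ Icc (-1:ℝ) 1 := by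
      intro t ht
      have h1 : (0:ℝ) ≤ m * (t + 1) := mul_nonneg hm0.le (by linarith [ht.1])
      have h2 : (0:ℝ) ≤ m * (1 - t) := mul_nonneg hm0.le (by linarith [ht.2])
      constructor <;> nlinarith [ht.1, ht.2, hm0, hm2]
    refine ⟨derivFamilyOn_reparam _ _ hD hmaps, ?_⟩
    exact strongly_aux hr rfl hM0 hB hub hlow (by linarith) (by linarith)
      (by nlinarith) hmaps
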